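/- The tent map T_s with √2 < s ≤ 2 restricted to I₀(s) = [s(1−s/2), s/2] is topologically transitive, i.e., there exists a point in I₀(s) whose forward orbit is dense in I₀(s). -/

import Mathlib

/-- The tent map. -/
noncomputable def tent (s x : ℝ) : ℝ := if x ≤ 1/2 then s * x else s * (1 - x)

lemma tent_of_le {s x : ℝ} (h : x ≤ 1/2) : tent s x = s * x := if_pos h

lemma tent_of_ge {s x : ℝ} (h : 1/2 ≤ x) : tent s x = s * (1 - x) := by
  unfold tent
  split_ifs with h'
  · have : x = 1/2 := le_antisymm h' h
    rw [this]; norm_num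
  · rfl

lemma tent_cont (s : ℝ) : Continuous (tent s) := by
  have : tent s = fun x => s * min x (1 - x) := by
    funext x
    unfold tent
    split_ifs with h
    · rw [min_eq_left (by linarith)]
    · rw [min_eq_right (by push_neg at h; linarith)]
  rw [this]
  fun_prop

-- image containment on the left branch
lemma img_left {s c d : ℝ} (hs : 0 < s) (hd : d ≤ 1/2) :
    Set.Icc (s*c) (s*d) ⊆ tent s '' Set.Icc c d := by
  rintro y ⟨h1, h2⟩
  refine ⟨y / s, ⟨?_, ?_⟩, ?_⟩
  · rw [le_div_iff₀ hs]; linarith [h1]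
  · rw [div_le_iff₀ hs]; linarith [h2]
  · rw [tent_of_le (by rw [div_le_iff₀ hs]; nlinarith)]
    field_simp

lemma img_right {s c d : ℝ} (hs : 0 < s) (hc : 1/2 ≤ c) :
    Set.Icc (s*(1-d)) (s*(1-c)) ⊆ tent s '' Set.Icc c d := by
  rintro y ⟨h1, h2⟩
  refine ⟨1 - y / s, ⟨?_, ?_⟩, ?_⟩
  · have : y / s ≤ 1 - c := by rw [div_le_iff₀ hs]; linarith
    linarith
  · have : 1 - d ≤ y / s := by rw [le_div_iff₀ hs]; linarith
    linarith
  · have hc' : y / s ≤ 1 - c := by rw [div_le_iff₀ hs]; linarith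
    rw [tent_of_ge (by linarith)]
    field_simp
    ring

set_option maxHeartbeats 2000000 in
lemma tent_cover {s : ℝ} (hs1 : Real.sqrt 2 < s) (hs2 : s ≤ 2) (m : ℕ) :
    ∀ c d : ℝ, s*(1-s/2) ≤ c → d ≤ s/2 → c < d →
      s/2 - s*(1-s/2) ≤ (s^2/2)^m * (d - c) →
      ∃ n, Set.Icc (s*(1-s/2)) (s/2) ⊆ (tent s)^[n] '' Set.Icc c d := by
  have hsq : (2:ℝ) < s^2 := by
    have h0 : (0:ℝ) ≤ Real.sqrt 2 := Real.sqrt_nonneg 2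
    nlinarith [Real.sq_sqrt (by norm_num : (0:ℝ) ≤ 2)]
  have hs0 : (0:ℝ) < s := lt_of_le_of_lt (Real.sqrt_nonneg 2) hs1
  have hs1' : (1:ℝ) < s := by nlinarith
  induction m with
  | zero =>
    intro c d hc hd hcd hlen
    simp only [pow_zero, one_mul] at hlen
    have hca : c = s*(1-s/2) := by nlinarith
    have hdb : d = s/2 := by nlinarith
    refine ⟨0, ?_⟩
    simp [hca, hdb]
  | succ m ih =>
    intro c d hc hd hcd hlen
    have ha0 : 0 ≤ s*(1-s/2) := by nlinarith
    have hac : s*(1-s/2) ≤ s*c := by nlinarith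
    have hpm : (0:ℝ) ≤ (s^2/2)^m := by positivity
    have hps : (s^2/2)^(m+1) = (s^2/2)^m * (s^2/2) := pow_succ _ _
    rcases le_or_gt d (1/2) with hd2 | hd2
    · -- case A : d ≤ 1/2, image ⊇ [s*c, s*d]
      obtain ⟨n, hn⟩ := ih (s*c) (s*d) hac (by nlinarith) (by nlinarith) (by nlinarith)
      refine ⟨n+1, ?_⟩
      rw [Function.iterate_succ, Set.image_comp]
      exact hn.trans (Set.image_mono (img_left hs0 hd2))
    · rcases le_or_gt (1/2) c with hc2 | hc2
      · -- case B : 1/2 ≤ c, image ⊇ [s(1-d), s(1-c)]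
        obtain ⟨n, hn⟩ := ih (s*(1-d)) (s*(1-c)) (by nlinarith) (by nlinarith)
          (by nlinarith) (by nlinarith)
        refine ⟨n+1, ?_⟩
        rw [Function.iterate_succ, Set.image_comp]
        exact hn.trans (Set.image_mono (img_right hs0 hc2))
      · -- case C : c < 1/2 < d
        -- obtain e with [e, s/2] ⊆ tent '' Icc c d, a ≤ e, s/2 - e ≥ (s/2)(d-c)
        have hmain : ∃ e, s*(1-s/2) ≤ e ∧ (s/2)*(d-c) ≤ s/2 - e ∧
            Set.Icc e (s/2) ⊆ tent s '' Set.Icc c d := by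
          rcases le_total (1/2 - c) (d - 1/2) with hh | hh
          · refine ⟨s*(1-d), by nlinarith, by nlinarith, ?_⟩
            have h1 : Set.Icc (s*(1-d)) (s*(1-(1/2))) ⊆ tent s '' Set.Icc (1/2) d :=
              img_right hs0 le_rfl
            have h2 : s*(1-(1/2:ℝ)) = s/2 := by ring
            rw [h2] at h1
            exact h1.trans (Set.image_mono (Set.Icc_subset_Icc (by linarith) le_rfl))
          · have hx : (s/2)*(d-c) ≤ s/2 - s*c := by
              nlinarith [mul_le_mul_of_nonneg_left (show d - c ≤ 2*(1/2 - c) by linarith) hs0.le]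
            have h1 : Set.Icc (s*c) (s*(1/2)) ⊆ tent s '' Set.Icc c (1/2) :=
              img_left hs0 le_rfl
            have h2 : s*(1/2:ℝ) = s/2 := by ring
            rw [h2] at h1
            exact ⟨s*c, hac, hx,
              h1.trans (Set.image_mono (Set.Icc_subset_Icc le_rfl (by linarith)))⟩
        obtain ⟨e, hea, hel, hesub⟩ := hmain
        rcases le_or_gt e (1/2) with he2 | he2
        · -- second image covers everything
          refine ⟨2, ?_⟩
          have h1 : Set.Icc (s*(1-s/2)) (s*(1-(1/2))) ⊆ tent s '' Set.Icc (1/2) (s/2) :=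
            img_right hs0 le_rfl
          have h2 : s*(1-(1/2:ℝ)) = s/2 := by ring
          rw [h2] at h1
          have h3 : Set.Icc (1/2) (s/2) ⊆ Set.Icc e (s/2) :=
            Set.Icc_subset_Icc he2 le_rfl
          show Set.Icc (s*(1-s/2)) (s/2) ⊆ (tent s)^[2] '' Set.Icc c d
          have : (tent s)^[2] = (tent s)^[1] ∘ (tent s) := Function.iterate_succ _ _
          rw [show (2:ℕ) = 1 + 1 from rfl, Function.iterate_succ, Set.image_comp,
            Function.iterate_one]
          exact h1.trans ((Set.image_mono h3).trans (Set.image_mono hesub))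
        · -- e > 1/2 : one more contraction, image ⊇ [a, s(1-e)]
          have hnew : Set.Icc (s*(1-(s/2))) (s*(1-e)) ⊆ tent s '' Set.Icc e (s/2) :=
            img_right hs0 he2.le
          have hkey : s / 2 - s * (1 - s / 2) ≤ (s ^ 2 / 2) ^ m * (s * (1 - e) - s * (1 - s / 2)) := by
            nlinarith [mul_le_mul_of_nonneg_left (mul_le_mul_of_nonneg_left hel hs0.le) hpm]
          obtain ⟨n, hn⟩ := ih (s*(1-(s/2))) (s*(1-e)) le_rfl (by nlinarith)
            (by nlinarith) hkey
          refine ⟨n+2, ?_⟩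
          rw [show n+2 = (n+1)+1 from rfl, Function.iterate_succ, Set.image_comp,
            Function.iterate_succ, Set.image_comp]
          refine hn.trans ?_
          refine (Set.image_mono hnew).trans ?_
          exact Set.image_mono (Set.image_mono hesub)

set_option maxHeartbeats 1000000 in
theorem tent_transitive_on_I0 (s : ℝ) (hs1 : Real.sqrt 2 < s) (hs2 : s ≤ 2) :
    ∃ x ∈ Set.Icc (s * (1 - s/2)) (s/2),
      Set.Icc (s * (1 - s/2)) (s/2) ⊆
        closure {y : ℝ | ∃ n : ℕ, (tent s)^[n] x = y} := by
  have hsq : (2:ℝ) < s^2 := by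
    nlinarith [Real.sq_sqrt (by norm_num : (0:ℝ) ≤ 2), Real.sqrt_nonneg 2]
  have hs0 : (0:ℝ) < s := lt_of_le_of_lt (Real.sqrt_nonneg 2) hs1
  have hs1' : (1:ℝ) < s := by nlinarith
  set a := s * (1 - s/2) with ha
  set b := s / 2 with hb
  have ha2 : a < 1/2 := by rw [ha]; nlinarith [sq_nonneg (s-1)]
  have hb2 : 1/2 < b := by rw [hb]; linarith
  have hab : a < b := ha2.trans hb2
  have ha0 : 0 ≤ a := by rw [ha]; nlinarith
  -- invariance
  have hinv : Set.MapsTo (tent s) (Set.Icc a b) (Set.Icc a b) := by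
    rintro x ⟨hx1, hx2⟩
    rcases le_or_gt x (1/2) with h | h
    · rw [tent_of_le h]
      constructor
      · nlinarith
      · rw [hb]; nlinarith
    · rw [tent_of_ge h.le]
      constructor
      · rw [ha]; nlinarith [hx2]
      · rw [hb]; nlinarith
  -- transitivity from covering
  have hcover : ∀ c d : ℝ, a ≤ c → d ≤ b → c < d →
      ∃ n, Set.Icc a b ⊆ (tent s)^[n] '' Set.Icc c d := by
    intro c d hc hd hcd
    have h1 : (1:ℝ) < s^2/2 := by linarith
    obtain ⟨m, hm⟩ := pow_unbounded_of_one_lt ((b - a)/(d - c)) h1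
    refine tent_cover hs1 hs2 m c d hc hd hcd ?_
    rw [div_lt_iff₀ (by linarith)] at hm
    nlinarith
  -- set up subtype
  haveI : CompleteSpace (Set.Icc a b) := isClosed_Icc.completeSpace_coe
  haveI hne : Nonempty (Set.Icc a b) := ⟨⟨a, le_refl a, hab.le⟩⟩
  set I : Set ℝ := Set.Icc a b with hI
  let F : I → I := hinv.restrict _ _ _
  have hFc : Continuous F := (tent_cont s).restrict hinv
  have hFco : ∀ (n : ℕ) (x : I), ((F^[n] x : I) : ℝ) = (tent s)^[n] (x : ℝ) := by
    intro n
    induction n with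
    | zero => intro x; simp
    | succ n ihn =>
      intro x
      rw [Function.iterate_succ_apply, Function.iterate_succ_apply, ihn]
      rfl
  obtain ⟨u, hu⟩ : ∃ u : ℕ → I, DenseRange u := TopologicalSpace.exists_dense_seq I
  -- the Gδ sets
  set G : ℕ × ℕ → Set I := fun p =>
    ⋃ n : ℕ, (F^[n]) ⁻¹' (Metric.ball (u p.1) (1/(p.2+1))) with hG
  have hGopen : ∀ p, IsOpen (G p) := by
    intro p
    exact isOpen_iUnion fun n => (hFc.iterate n).isOpen_preimage _ Metric.isOpen_ball
  have hGdense : ∀ p, Dense (G p) := by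
    intro p
    rw [Metric.dense_iff]
    intro z r hr
    -- find nondegenerate subinterval of I within r of z
    set c := max a ((z:ℝ) - r/2) with hc
    set d := min b ((z:ℝ) + r/2) with hd
    have hz1 : a ≤ (z:ℝ) := z.2.1
    have hz2 : (z:ℝ) ≤ b := z.2.2
    have hcd : c < d := by
      rw [hc, hd]
      apply max_lt <;> [skip; skip] <;> apply lt_min <;> linarith
    obtain ⟨n, hn⟩ := hcover c d (le_max_left _ _) (min_le_left _ _) hcd
    have hui : ((u p.1 : I) : ℝ) ∈ Set.Icc a b := (u p.1).2
    obtain ⟨w, hw, hweq⟩ := hn hui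
    have hwI : w ∈ I := by
      constructor
      · exact le_trans (le_max_left _ _) hw.1
      · exact le_trans hw.2 (min_le_left _ _)
    refine ⟨⟨w, hwI⟩, ?_, ?_⟩
    · rw [Metric.mem_ball, Subtype.dist_eq]
      have h1 : (z:ℝ) - r/2 ≤ w := le_trans (le_max_right _ _) hw.1
      have h2 : w ≤ (z:ℝ) + r/2 := le_trans hw.2 (min_le_right _ _)
      rw [Real.dist_eq, abs_lt]
      constructor <;> linarith
    · rw [hG]
      refine Set.mem_iUnion.2 ⟨n, ?_⟩
      have : ((F^[n] ⟨w, hwI⟩ : I) : ℝ) = ((u p.1 : I) : ℝ) := by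
        rw [hFco]; exact hweq
      have heq : F^[n] ⟨w, hwI⟩ = u p.1 := Subtype.ext this
      simp only [Set.mem_preimage, heq]
      exact Metric.mem_ball_self (by positivity)
  have hdense : Dense (⋂ p, G p) := dense_iInter_of_isOpen hGopen hGdense
  obtain ⟨x₀, hx₀⟩ := hdense.nonempty
  refine ⟨(x₀ : ℝ), x₀.2, ?_⟩
  intro y hy
  rw [Metric.mem_closure_iff]
  intro ε hε
  obtain ⟨i, hi⟩ := Metric.denseRange_iff.1 hu ⟨y, hy⟩ (ε/2) (by linarith)
  obtain ⟨k, hk⟩ := exists_nat_one_div_lt (show (0:ℝ) < ε/2 by linarith)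
  have hx₀' := Set.mem_iInter.1 hx₀ (i, k)
  rw [hG] at hx₀'
  obtain ⟨n, hn⟩ := Set.mem_iUnion.1 hx₀'
  refine ⟨(tent s)^[n] (x₀ : ℝ), ⟨n, rfl⟩, ?_⟩
  have hdist : dist (F^[n] x₀) (u i) < 1/(k+1) := Metric.mem_ball.1 hn
  rw [Subtype.dist_eq, hFco] at hdist
  have hdist2 : dist (⟨y, hy⟩ : I) (u i) < ε/2 := hi
  rw [Subtype.dist_eq] at hdist2
  calc dist y ((tent s)^[n] (x₀:ℝ))
      ≤ dist y ((u i : I) : ℝ) + dist ((u i : I) : ℝ) ((tent s)^[n] (x₀:ℝ)) := dist_triangle _ _ _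
    _ < ε/2 + ε/2 := by
        apply add_lt_add hdist2
        rw [dist_comm]
        calc dist ((tent s)^[n] (x₀:ℝ)) ((u i : I) : ℝ) < 1/(k+1) := hdist
          _ < ε/2 := by exact_mod_cast hk
    _ = ε := by ring
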